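/- Let R̂ = ℂ[[x,y]] and let I ⊆ J be ideals of R̂ with dim_ℂ(R̂/J) = n and dim_ℂ(R̂/I) = n+2, so that dim_ℂ(J/I) = 2. Then: (i) if x·J ⊆ I and y·J ⊆ I, then every ℂ-linear subspace V with I ⊆ V ⊆ J and dim_ℂ(V/I) = 1 is an ideal of R̂; (ii) if x·J ⊈ I or y·J ⊈ I, then there exists exactly one ideal V of R̂ with I ⊆ V ⊆ J and dim_ℂ(J/V) = 1. -/

import Mathlib

/-!
Statement 15: let I ⊆ J be ideals of R̂ = ℂ[[x,y]] of colengths n+2 and n (so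
dim_ℂ(J/I) = 2). (i) If x·J ⊆ I and y·J ⊆ I then every intermediate ℂ-subspace
I ⊆ V ⊆ J with dim_ℂ(V/I) = 1 is an ideal; (ii) otherwise there is exactly one ideal V
with I ⊆ V ⊆ J and dim_ℂ(J/V) = 1.
-/

set_option synthInstance.maxHeartbeats 1000000
set_option maxHeartbeats 1000000

noncomputable section

/-- `R̂ = ℂ[[x,y]]`. -/
abbrev Rhat : Type := MvPowerSeries (Fin 2) ℂ

/-- `x·J ⊆ I` and `y·J ⊆ I`, i.e. `J/I` is a trivial `ℂ[[x,y]]`-module. -/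
def TriviallyRelated (I J : Ideal Rhat) : Prop :=
  ∀ f ∈ J, MvPowerSeries.X (0 : Fin 2) * f ∈ I ∧ MvPowerSeries.X (1 : Fin 2) * f ∈ I

open MvPowerSeries in
lemma rhat_decomp (f : Rhat) : ∃ g h : Rhat,
    f = MvPowerSeries.C (MvPowerSeries.constantCoeff f)
      + MvPowerSeries.X 0 * g + MvPowerSeries.X 1 * h := by
  classical
  have hcf : ∀ (φ : (Fin 2 →₀ ℕ) → ℂ) (m : Fin 2 →₀ ℕ), MvPowerSeries.coeff m (φ : Rhat) = φ m :=
    fun _ _ => rfl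
  set p : Rhat := fun m => if m 0 = 0 then 0 else MvPowerSeries.coeff m f with hp
  set q : Rhat := fun m => if m 0 = 0 ∧ m 1 ≠ 0 then MvPowerSeries.coeff m f else 0 with hq
  obtain ⟨g, hg⟩ : (MvPowerSeries.X 0 : Rhat) ∣ p :=
    MvPowerSeries.X_dvd_iff.2 fun m hm => by
      simp [hcf, hp, hm]
  obtain ⟨h, hh⟩ : (MvPowerSeries.X 1 : Rhat) ∣ q :=
    MvPowerSeries.X_dvd_iff.2 fun m hm => by
      simp [hcf, hq, hm]
  refine ⟨g, h, ?_⟩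
  rw [← hg, ← hh]
  ext m
  rw [map_add, map_add, MvPowerSeries.coeff_C]
  by_cases h0 : m 0 = 0
  · by_cases h1 : m 1 = 0
    · have hm : m = 0 := Finsupp.ext fun i => by fin_cases i <;> assumption
      subst hm
      simp [hcf, hp, hq, MvPowerSeries.coeff_zero_eq_constantCoeff]
    · have hm : m ≠ 0 := fun hc => h1 (by simp [hc])
      simp [hcf, hp, hq, h0, h1, hm]
  · have hm : m ≠ 0 := fun hc => h0 (by simp [hc])
    simp [hcf, hp, hq, h0, hm]

/-- Relative quotient equivalence: pushing `B ⧸ A` through a linear map whose kernel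
is contained in `A`. -/
lemma relEquiv {K M N : Type*} [Field K] [AddCommGroup M] [AddCommGroup N]
    [Module K M] [Module K N]
    (π : M →ₗ[K] N) (A B : Submodule K M) (hker : LinearMap.ker π ≤ A) :
    Nonempty ((↥B ⧸ Submodule.comap B.subtype A) ≃ₗ[K]
      (↥(Submodule.map π B) ⧸
        Submodule.comap (Submodule.map π B).subtype (Submodule.map π A))) := by
  set f : ↥B →ₗ[K] ↥(Submodule.map π B) :=
    LinearMap.codRestrict _ (π.comp B.subtype) (fun b => Submodule.mem_map_of_mem b.2) with hf
  set p := Submodule.comap (Submodule.map π B).subtype (Submodule.map π A) with hpdef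
  set ψ : ↥B →ₗ[K] (↥(Submodule.map π B) ⧸ p) := p.mkQ.comp f with hψ
  have hsurj : Function.Surjective ψ := by
    rintro z
    obtain ⟨⟨y, hy⟩, rfl⟩ := Submodule.Quotient.mk_surjective p z
    obtain ⟨b, hb, rfl⟩ := hy
    exact ⟨⟨b, hb⟩, rfl⟩
  have hker' : LinearMap.ker ψ = Submodule.comap B.subtype A := by
    ext b
    simp only [LinearMap.mem_ker, hψ, LinearMap.comp_apply, Submodule.mkQ_apply,
      Submodule.Quotient.mk_eq_zero, Submodule.mem_comap, hpdef]
    constructor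
    · intro hb
      obtain ⟨a, ha, hab⟩ := hb
      have hsub : (b : M) - a ∈ A := hker (by
        simp only [LinearMap.mem_ker, map_sub, hab]
        simp [hf])
      have := A.add_mem ha hsub
      simpa using this
    · intro hb
      exact ⟨b, hb, rfl⟩
  exact ⟨(Submodule.quotEquivOfEq _ _ hker'.symm).trans (ψ.quotKerEquivOfSurjective hsurj)⟩

lemma rhat_C_mul (c : ℂ) (v : Rhat) : MvPowerSeries.C c * v = c • v := by
  rw [Algebra.smul_def, MvPowerSeries.algebraMap_apply]
  norm_num

lemma rhat_isUnit {f : Rhat} (h : MvPowerSeries.constantCoeff f ≠ 0) : IsUnit f :=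
  MvPowerSeries.isUnit_iff_constantCoeff.2 (isUnit_iff_ne_zero.2 h)

lemma X_mem_jacobson (i : Fin 2) :
    MvPowerSeries.X i ∈ Ideal.jacobson (⊥ : Ideal Rhat) := by
  rw [Ideal.mem_jacobson_bot]
  intro y
  apply rhat_isUnit
  simp [map_add, map_mul, MvPowerSeries.constantCoeff_X]

lemma part_one (I J : Ideal Rhat) (htriv : TriviallyRelated I J)
    (V : Submodule ℂ Rhat)
    (hIV : Submodule.restrictScalars ℂ I ≤ V) (hVJ : V ≤ Submodule.restrictScalars ℂ J) :
    ∃ W : Ideal Rhat, Submodule.restrictScalars ℂ W = V := by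
  refine ⟨{ carrier := V,
            add_mem' := fun ha hb => V.add_mem ha hb,
            zero_mem' := V.zero_mem,
            smul_mem' := ?_ }, by ext x; rfl⟩
  intro r v hv
  obtain ⟨g, h, hr⟩ := rhat_decomp r
  set c := MvPowerSeries.constantCoeff r with hc
  obtain ⟨hx, hy⟩ := htriv v (hVJ hv)
  have key : r • v = c • v
      + g * (MvPowerSeries.X 0 * v) + h * (MvPowerSeries.X 1 * v) := by
    rw [smul_eq_mul, ← rhat_C_mul, hr]; ring
  show r • v ∈ V
  rw [key]
  exact V.add_mem (V.add_mem (V.smul_mem _ hv) (hIV (I.mul_mem_left g hx)))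
    (hIV (I.mul_mem_left h hy))

lemma main_step (J V : Ideal Rhat)
    (hrank : Module.rank ℂ (↥(Submodule.restrictScalars ℂ J) ⧸
      Submodule.comap (Submodule.restrictScalars ℂ J).subtype
        (Submodule.restrictScalars ℂ V)) = 1)
    (z : Rhat) (hz : MvPowerSeries.constantCoeff z = 0) :
    ∀ g ∈ J, z * g ∈ V := by
  classical
  set Jc := Submodule.restrictScalars ℂ J with hJc
  by_contra hcon
  push_neg at hcon
  obtain ⟨s, hsJ, hsV⟩ := hcon
  set Vc := Submodule.restrictScalars ℂ V with hVc
  set p := Submodule.comap Jc.subtype Vc with hpdef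
  set μ : ↥Jc →ₗ[ℂ] ↥Jc :=
    { toFun := fun g => ⟨z * (g : Rhat), J.mul_mem_left z g.2⟩,
      map_add' := fun a b => by ext; simp [mul_add]
      map_smul' := fun c a => by ext; simp [mul_smul_comm] } with hμdef
  have hμker : p ≤ LinearMap.ker (p.mkQ.comp μ) := by
    intro g hg
    simp only [LinearMap.mem_ker, LinearMap.comp_apply, Submodule.mkQ_apply,
      Submodule.Quotient.mk_eq_zero, hpdef, Submodule.mem_comap]
    exact V.mul_mem_left z hg
  set ℓ : (↥Jc ⧸ p) →ₗ[ℂ] (↥Jc ⧸ p) := Submodule.liftQ p (p.mkQ.comp μ) hμker with hℓdef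
  have hℓmk : ∀ g : ↥Jc, ℓ (Submodule.Quotient.mk g) = Submodule.Quotient.mk (μ g) :=
    fun g => rfl
  obtain ⟨v₀, hv₀⟩ := rank_le_one_iff.1 hrank.le
  obtain ⟨c₀, hc₀⟩ := hv₀ (ℓ v₀)
  have hall : ∀ w : ↥Jc ⧸ p, ℓ w = c₀ • w := by
    intro w
    obtain ⟨a, ha⟩ := hv₀ w
    rw [← ha, map_smul, ← hc₀, smul_comm]
  set sJ : ↥Jc := ⟨s, hsJ⟩ with hsJdef
  have hms : ∀ g : ↥Jc, (g : Rhat) ∈ V → (Submodule.Quotient.mk g : ↥Jc ⧸ p) = 0 :=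
    fun g hg => (Submodule.Quotient.mk_eq_zero p).2 hg
  have hc₀ne : c₀ ≠ 0 := by
    intro h0
    have h1 := hall (Submodule.Quotient.mk sJ)
    rw [h0, zero_smul, hℓmk] at h1
    have h2 : μ sJ ∈ p := (Submodule.Quotient.mk_eq_zero p).1 h1
    exact hsV h2
  have hrel : ∀ g : Rhat, ∀ hg : g ∈ J, z * g - c₀ • g ∈ V := by
    intro g hg
    have h1 := hall (Submodule.Quotient.mk (⟨g, hg⟩ : ↥Jc))
    rw [hℓmk] at h1
    have h2 : (Submodule.Quotient.mk (μ ⟨g, hg⟩ - c₀ • (⟨g, hg⟩ : ↥Jc)) : ↥Jc ⧸ p) = 0 := by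
      rw [Submodule.Quotient.mk_sub]
      rw [h1]
      rw [Submodule.Quotient.mk_smul]
      rw [sub_self]
    have h3 := (Submodule.Quotient.mk_eq_zero p).1 h2
    exact h3
  set u : Rhat := z - MvPowerSeries.C c₀ with hu
  have huunit : IsUnit u := by
    apply rhat_isUnit
    rw [hu, map_sub, hz, MvPowerSeries.constantCoeff_C, zero_sub, neg_ne_zero]
    exact hc₀ne
  have huJ : ∀ g ∈ J, u * g ∈ V := by
    intro g hg
    have heq : u * g = z * g - c₀ • g := by
      rw [hu, sub_mul, rhat_C_mul]
    rw [heq]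
    exact hrel g hg
  obtain ⟨w, hw⟩ := huunit.exists_left_inv
  have hJV : J ≤ V := by
    intro g hg
    have heq : g = w * (u * g) := by rw [← mul_assoc, hw, one_mul]
    rw [heq]
    exact V.mul_mem_left w (huJ g hg)
  have hptop : p = ⊤ := by
    rw [eq_top_iff]
    intro g _
    exact hJV g.2
  rw [hptop] at hrank
  haveI : Subsingleton (↥Jc ⧸ (⊤ : Submodule ℂ ↥Jc)) :=
    Submodule.Quotient.subsingleton_iff.2 rfl
  rw [rank_subsingleton'] at hrank
  exact zero_ne_one hrank

theorem statement15 (n : ℕ) (I J : Ideal Rhat) (hIJ : I ≤ J)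
    (hJ : Module.rank ℂ (Rhat ⧸ J) = (n : Cardinal))
    (hI : Module.rank ℂ (Rhat ⧸ I) = ((n + 2 : ℕ) : Cardinal)) :
    (TriviallyRelated I J →
      ∀ V : Submodule ℂ Rhat,
        Submodule.restrictScalars ℂ I ≤ V → V ≤ Submodule.restrictScalars ℂ J →
        Module.rank ℂ
            (↥V ⧸ Submodule.comap V.subtype (Submodule.restrictScalars ℂ I)) = 1 →
        ∃ W : Ideal Rhat, Submodule.restrictScalars ℂ W = V) ∧
    (¬ TriviallyRelated I J →
      ∃! V : Ideal Rhat, I ≤ V ∧ V ≤ J ∧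
        Module.rank ℂ
            (↥(Submodule.restrictScalars ℂ J) ⧸
              Submodule.comap (Submodule.restrictScalars ℂ J).subtype
                (Submodule.restrictScalars ℂ V)) = 1) := by
  constructor
  · intro htriv V hIV hVJ _
    exact part_one I J htriv V hIV hVJ
  · intro hnt
    classical
    set Ic := Submodule.restrictScalars ℂ I with hIc
    set Jc := Submodule.restrictScalars ℂ J with hJc
    set mk : Rhat →ₗ[ℂ] (Rhat ⧸ I) := I.mkQ.restrictScalars ℂ with hmkdef
    have hmk_eq : ∀ x : Rhat, mk x = Submodule.Quotient.mk x := fun x => rfl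
    have hmksurj : Function.Surjective mk := Submodule.Quotient.mk_surjective I
    have hker : LinearMap.ker mk = Ic := by
      ext x
      simp only [LinearMap.mem_ker, hmk_eq, Submodule.Quotient.mk_eq_zero, hIc,
        Submodule.restrictScalars_mem]
    haveI hfinQ : Module.Finite ℂ (Rhat ⧸ I) := Module.finite_of_rank_eq_nat hI
    haveI : IsNoetherian ℂ (Rhat ⧸ I) := IsNoetherian.iff_fg.2 hfinQ
    have hfrQ : Module.finrank ℂ (Rhat ⧸ I) = n + 2 := Module.finrank_eq_of_rank_eq hI
    set JQ := Submodule.map mk Jc with hJQdef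
    -- injectivity of mapping to Q on ideals above I
    have le_of : ∀ A B : Ideal Rhat, I ≤ B →
        Submodule.map mk (Submodule.restrictScalars ℂ A) ≤
        Submodule.map mk (Submodule.restrictScalars ℂ B) → A ≤ B := by
      intro A B hB hle x hx
      obtain ⟨b, hb, hbe⟩ := hle ⟨x, hx, rfl⟩
      have hbx : b - x ∈ I := by
        rw [hmk_eq, hmk_eq] at hbe
        exact (Submodule.Quotient.eq (I : Submodule Rhat Rhat)).1 hbe
      have : x = b - (b - x) := by ring
      rw [this]
      exact B.sub_mem hb (hB hbx)
    have mapinj : ∀ A B : Ideal Rhat, I ≤ A → I ≤ B →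
        Submodule.map mk (Submodule.restrictScalars ℂ A) =
        Submodule.map mk (Submodule.restrictScalars ℂ B) → A = B := by
      intro A B hA hB h
      exact le_antisymm (le_of A B hB h.le) (le_of B A hA h.ge)
    -- finrank of JQ is 2
    have hrankQJ : Module.rank ℂ ((Rhat ⧸ I) ⧸ JQ) = n := by
      set φ : Rhat →ₗ[ℂ] ((Rhat ⧸ I) ⧸ JQ) := JQ.mkQ.comp mk with hφ
      have hs : Function.Surjective φ :=
        (Submodule.Quotient.mk_surjective JQ).comp hmksurj
      have hk : LinearMap.ker φ = Jc := by
        ext x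
        simp only [hφ, LinearMap.mem_ker, LinearMap.comp_apply, Submodule.mkQ_apply,
          Submodule.Quotient.mk_eq_zero, hJc, Submodule.restrictScalars_mem]
        constructor
        · rintro ⟨j, hj, hje⟩
          have hxj : j - x ∈ I := by
            rw [hmk_eq] at hje
            exact (Submodule.Quotient.eq (I : Submodule Rhat Rhat)).1 hje
          have : x = j - (j - x) := by ring
          rw [this]
          exact J.sub_mem hj (hIJ hxj)
        · intro hx; exact ⟨x, hx, rfl⟩
      have E1 := (Submodule.quotEquivOfEq _ _ hk.symm).trans (φ.quotKerEquivOfSurjective hs)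
      rw [← E1.rank_eq, (Submodule.Quotient.restrictScalarsEquiv ℂ (J : Submodule Rhat Rhat)).rank_eq, hJ]
    have hfrJQ : Module.finrank ℂ ↥JQ = 2 := by
      have h2 := Submodule.finrank_quotient_add_finrank JQ
      have h3 : Module.finrank ℂ ((Rhat ⧸ I) ⧸ JQ) = n := Module.finrank_eq_of_rank_eq hrankQJ
      omega
    -- key rank converter
    have key : ∀ V : Ideal Rhat, I ≤ V → V ≤ J →
        (Module.rank ℂ (↥Jc ⧸ Submodule.comap Jc.subtype (Submodule.restrictScalars ℂ V)) = 1 ↔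
         Module.finrank ℂ ↥(Submodule.map mk (Submodule.restrictScalars ℂ V)) = 1) := by
      intro V hIV hVJ
      set Vc := Submodule.restrictScalars ℂ V with hVc
      set VQ := Submodule.map mk Vc with hVQ
      have hVQJQ : VQ ≤ JQ := Submodule.map_mono (fun x hx => hVJ hx)
      have hkerV : LinearMap.ker mk ≤ Vc := by rw [hker]; exact fun x hx => hIV hx
      obtain ⟨E⟩ := relEquiv mk Vc Jc hkerV
      have hq := Submodule.finrank_quotient_add_finrank (Submodule.comap JQ.subtype VQ)
      have hcomap : Module.finrank ℂ ↥(Submodule.comap JQ.subtype VQ) = Module.finrank ℂ ↥VQ :=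
        (Submodule.comapSubtypeEquivOfLe hVQJQ).finrank_eq
      rw [E.rank_eq, ← hJQdef, ← hVQ]
      constructor
      · intro h
        have h4 := Module.finrank_eq_of_rank_eq h
        omega
      · intro h
        rw [← Module.finrank_eq_rank]
        have : Module.finrank ℂ (↥JQ ⧸ Submodule.comap JQ.subtype VQ) = 1 := by omega
        rw [this]
        norm_num
    -- the maximal ideal and the candidate W
    set mm : Ideal Rhat := Ideal.span {MvPowerSeries.X 0, MvPowerSeries.X 1} with hmmdef
    set W : Ideal Rhat := I ⊔ mm * J with hWdef
    have hWJ : W ≤ J := sup_le hIJ Ideal.mul_le_right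
    have hIW : I ≤ W := le_sup_left
    have hmjac : mm ≤ Ideal.jacobson ⊥ := by
      rw [hmmdef, Ideal.span_le]
      rintro z hz
      rcases hz with rfl | hz
      · exact X_mem_jacobson 0
      · rw [Set.mem_singleton_iff] at hz
        rw [hz]
        exact X_mem_jacobson 1
    -- Nakayama: J is not contained in W
    have hJW : ¬ J ≤ W := by
      intro hJW
      set N : Submodule Rhat (Rhat ⧸ I) := Submodule.map I.mkQ (J : Submodule Rhat Rhat) with hN
      have hNJQ : Submodule.restrictScalars ℂ N = JQ := by
        ext x
        constructor
        · rintro ⟨j, hj, rfl⟩; exact ⟨j, hj, rfl⟩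
        · rintro ⟨j, hj, rfl⟩; exact ⟨j, hj, rfl⟩
      have hfg : N.FG := by
        obtain ⟨s, hs⟩ := IsNoetherian.noetherian (Submodule.restrictScalars ℂ N)
        refine ⟨s, le_antisymm ?_ ?_⟩
        · rw [Submodule.span_le]
          intro x hx
          have : x ∈ Submodule.span ℂ (s : Set (Rhat ⧸ I)) := Submodule.subset_span hx
          rw [hs] at this
          exact this
        · intro x hx
          have h1 : x ∈ Submodule.span ℂ (s : Set (Rhat ⧸ I)) := by rw [hs]; exact hx
          exact Submodule.span_le_restrictScalars ℂ Rhat (s : Set (Rhat ⧸ I)) h1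
      have hle : N ≤ mm • N := by
        have h1 : N ≤ Submodule.map I.mkQ ((I : Submodule Rhat Rhat) ⊔ mm • (J : Submodule Rhat Rhat)) := by
          apply Submodule.map_mono
          rw [Ideal.smul_eq_mul]
          exact hJW
        rwa [Submodule.map_sup, Submodule.map_smul'', Submodule.mkQ_map_self, bot_sup_eq] at h1
      have hbot : N = ⊥ :=
        Submodule.eq_bot_of_le_smul_of_le_jacobson_bot mm N hfg hle hmjac
      have hJQbot : JQ = ⊥ := by
        rw [← hNJQ, hbot]
        rfl
      rw [hJQbot] at hfrJQ
      rw [finrank_bot] at hfrJQ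
      omega
    -- a nonzero element of W/I
    rw [TriviallyRelated] at hnt
    push_neg at hnt
    obtain ⟨f0, hf0J, hf0⟩ := hnt
    have hzW : ∃ z, z ∈ mm * J ∧ z ∉ I := by
      have hor : MvPowerSeries.X (0 : Fin 2) * f0 ∉ I ∨ MvPowerSeries.X (1 : Fin 2) * f0 ∉ I := by
        tauto
      rcases hor with h | h
      · exact ⟨_, Ideal.mul_mem_mul (Ideal.subset_span (by simp)) hf0J, h⟩
      · exact ⟨_, Ideal.mul_mem_mul (Ideal.subset_span (by simp)) hf0J, h⟩
    -- finrank of WQ is 1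
    set WQ := Submodule.map mk (Submodule.restrictScalars ℂ W) with hWQdef
    have hWQle : WQ ≤ JQ := Submodule.map_mono (fun x hx => hWJ hx)
    have hWQne_bot : WQ ≠ ⊥ := by
      obtain ⟨z, hzm, hzI⟩ := hzW
      intro hb
      have hmem : mk z ∈ WQ := ⟨z, Ideal.mem_sup_right hzm, rfl⟩
      rw [hb, Submodule.mem_bot] at hmem
      rw [hmk_eq, Submodule.Quotient.mk_eq_zero] at hmem
      exact hzI hmem
    have hWQne : WQ ≠ JQ := by
      intro he
      have hWeqJ : W = J := mapinj W J hIW hIJ he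
      exact hJW (le_of_eq hWeqJ.symm)
    have hfrWQ : Module.finrank ℂ ↥WQ = 1 := by
      have h1 : Module.finrank ℂ ↥WQ ≠ 0 := by
        intro h0
        exact hWQne_bot (Submodule.finrank_eq_zero.1 h0)
      have h2 : Module.finrank ℂ ↥WQ < 2 := by
        have := Submodule.finrank_lt_finrank_of_lt (lt_of_le_of_ne hWQle hWQne)
        omega
      omega
    -- main step for uniqueness: any suitable ideal V absorbs multiplication by
    -- series with zero constant coefficient, applied to elements of J
    have main : ∀ V : Ideal Rhat, I ≤ V → V ≤ J →
        Module.rank ℂ (↥Jc ⧸ Submodule.comap Jc.subtype (Submodule.restrictScalars ℂ V)) = 1 →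
        ∀ z : Rhat, MvPowerSeries.constantCoeff z = 0 → ∀ g ∈ J, z * g ∈ V :=
      fun V _ _ hrank z hz => main_step J V hrank z hz
    -- conclusion
    refine ⟨W, ⟨hIW, hWJ, (key W hIW hWJ).2 hfrWQ⟩, ?_⟩
    rintro V ⟨hIV, hVJ, hrank⟩
    have hKV : mm * J ≤ V := by
      rw [Ideal.mul_le]
      intro r hr g hg
      refine Submodule.span_induction ?_ ?_ ?_ ?_ hr
      · rintro x hx
        rcases hx with rfl | hx
        · exact main V hIV hVJ hrank _ (MvPowerSeries.constantCoeff_X 0) g hg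
        · rw [Set.mem_singleton_iff] at hx
          rw [hx]
          exact main V hIV hVJ hrank _ (MvPowerSeries.constantCoeff_X 1) g hg
      · rw [zero_mul]; exact V.zero_mem
      · intro a b _ _ ha hb
        rw [add_mul]; exact V.add_mem ha hb
      · intro a x _ hx
        rw [smul_eq_mul, mul_assoc]
        exact V.mul_mem_left a hx
    have hWV : W ≤ V := sup_le hIV hKV
    have hfrVQ := (key V hIV hVJ).1 hrank
    set VQ2 := Submodule.map mk (Submodule.restrictScalars ℂ V) with hVQ2def
    have hle2 : WQ ≤ VQ2 := Submodule.map_mono (fun x hx => hWV hx)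
    have hfr2 : Module.finrank ℂ ↥VQ2 ≤ Module.finrank ℂ ↥WQ := by
      rw [hfrWQ]
      omega
    have hmapeq : WQ = VQ2 := Submodule.eq_of_le_of_finrank_le hle2 hfr2
    rw [hWQdef, hVQ2def] at hmapeq
    exact mapinj V W hIV hIW hmapeq.symm
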